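/- arXiv:2308.00469 — 2 statements merged into one kernel-verified Lean document; each statement's English description precedes it below -/
import Mathlib

section
/- Let A be a d×d real symmetric matrix with spectral decomposition A = UΛUᵀ, where U is orthogonal and Λ = diag(λ₁,…,λ_d). Let Λ̄ be the diagonal matrix with Λ̄_{ii} = min(max(λᵢ, ζ^{-1}), τ^{-1}), i.e. each eigenvalue is clamped to the interval [ζ^{-1}, τ^{-1}]. Then UΛ̄Uᵀ is the unique minimizer of the Frobenius distance ‖A − X‖_F over X ∈ S; that is, Π_S(A) = UΛ̄Uᵀ. -/
open MeasureTheory ProbabilityTheory Matrix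
open scoped BigOperators RealInnerProductSpace

noncomputable section

abbrev Vec (d : ℕ) := EuclideanSpace ℝ (Fin d)
abbrev Mat (d : ℕ) := Matrix (Fin d) (Fin d) ℝ

/-- View a Euclidean vector as a plain function. -/
def toPi {d : ℕ} (u : Vec d) : Fin d → ℝ := u
/-- View a plain function as a Euclidean vector. -/
def ofPi {d : ℕ} (u : Fin d → ℝ) : Vec d := WithLp.toLp 2 u

/-- Matrix-vector multiplication on Euclidean space. -/
def mvec {d : ℕ} (A : Mat d) (u : Vec d) : Vec d := ofPi (A.mulVec (toPi u))

/-- The standard Gaussian measure N(0, I_d) on ℝ^d. -/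
def gaussD (d : ℕ) : Measure (Vec d) :=
  (Measure.pi fun _ : Fin d => gaussianReal 0 1).map (MeasurableEquiv.toLp 2 (Fin d → ℝ))

/-- Frobenius norm of a matrix. -/
def matFrobNorm {m n : ℕ} (A : Matrix (Fin m) (Fin n) ℝ) : ℝ :=
  Real.sqrt (∑ i, ∑ j, (A i j) ^ 2)

/-- Operator (spectral) norm of a matrix. -/
def matOpNorm {m n : ℕ} (A : Matrix (Fin m) (Fin n) ℝ) : ℝ :=
  ‖LinearMap.toContinuousLinearMap (Matrix.toEuclideanLin A)‖

/-- Loewner order `A ⪯ B`. -/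
def loeLE {d : ℕ} (A B : Mat d) : Prop := (B - A).PosSemidef

/-- Hessian matrix of `f` at `x`. -/
def hess {d : ℕ} (f : Vec d → ℝ) (x : Vec d) : Mat d :=
  Matrix.of fun i j =>
    iteratedFDeriv ℝ 2 f x ![EuclideanSpace.single i 1, EuclideanSpace.single j 1]

/-- Membership in `S = {Σ symmetric : ζ⁻¹ I ⪯ Σ ⪯ τ⁻¹ I}`. -/
def Smem {d : ℕ} (τ ζ : ℝ) (A : Mat d) : Prop :=
  A.IsSymm ∧ loeLE (ζ⁻¹ • 1) A ∧ loeLE A (τ⁻¹ • 1)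

/-- Membership in `S' = {A symmetric : τ I ⪯ A ⪯ ζ I}`. -/
def S'mem {d : ℕ} (τ ζ : ℝ) (A : Mat d) : Prop :=
  A.IsSymm ∧ loeLE (τ • 1) A ∧ loeLE A (ζ • 1)

/-- The positive semidefinite square root, as `Matrix.PosSemidef.sqrt` was defined in older Mathlib. -/
def psdSqrt {d : ℕ} {S : Mat d} (hS : S.PosSemidef) : Mat d :=
  hS.1.eigenvectorUnitary.1 * diagonal ((↑) ∘ (√·) ∘ hS.1.eigenvalues) *
  (star hS.1.eigenvectorUnitary : Mat d)

/-- The regularized reparameterized objective `Q_α(μ, Σ)`. -/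
def Qa {d : ℕ} (f : Vec d → ℝ) (α : ℝ) (μ : Vec d) (S : Mat d) (hS : S.PosSemidef) : ℝ :=
  (∫ u, f (μ + α • mvec (psdSqrt hS) u) ∂ gaussD d) - α ^ 2 / 2 * Real.log S.det


section Stmt6Aux

variable {d : ℕ}

private lemma aux_frobSq_trace (M : Mat d) :
    ∑ i, ∑ j, (M i j)^2 = Matrix.trace (Mᵀ * M) := by
  simp [Matrix.trace, Matrix.mul_apply, Matrix.diag, sq]
  exact Finset.sum_comm

private lemma aux_frobSq_conj (U M : Mat d) (hU2 : Uᵀ * U = 1) :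
    ∑ i, ∑ j, ((U * M * Uᵀ) i j)^2 = ∑ i, ∑ j, (M i j)^2 := by
  rw [aux_frobSq_trace, aux_frobSq_trace]
  have h : (U * M * Uᵀ)ᵀ * (U * M * Uᵀ) = U * (Mᵀ * (Uᵀ * U) * M) * Uᵀ := by
    simp [Matrix.transpose_mul, Matrix.mul_assoc]
  rw [h, hU2, Matrix.mul_one, Matrix.trace_mul_cycle, hU2, Matrix.one_mul]

private lemma aux_conj (V : Mat d) {τ ζ : ℝ} (X : Mat d) (hV : Vᵀ * V = 1)
    (hX : Smem τ ζ X) : Smem τ ζ (V * X * Vᵀ) := by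
  have hV' : V * Vᵀ = 1 := mul_eq_one_comm.mp hV
  obtain ⟨hs, h1, h2⟩ := hX
  have hid : ∀ a : ℝ, V * (a • (1 : Mat d)) * Vᵀ = a • (1 : Mat d) := by
    intro a
    rw [mul_smul_comm, Matrix.mul_one, smul_mul_assoc, hV']
  refine ⟨?_, ?_, ?_⟩
  · show _ᵀ = _
    simp [Matrix.transpose_mul, Matrix.mul_assoc, hs.eq]
  · show (V * X * Vᵀ - ζ⁻¹ • 1).PosSemidef
    have e : V * X * Vᵀ - ζ⁻¹ • (1 : Mat d) = V * (X - ζ⁻¹ • 1) * Vᵀ := by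
      rw [Matrix.mul_sub, Matrix.sub_mul, hid]
    rw [e]
    simpa using Matrix.PosSemidef.mul_mul_conjTranspose_same h1 V
  · show (τ⁻¹ • 1 - V * X * Vᵀ).PosSemidef
    have e : τ⁻¹ • (1 : Mat d) - V * X * Vᵀ = V * (τ⁻¹ • 1 - X) * Vᵀ := by
      rw [Matrix.mul_sub, Matrix.sub_mul, hid]
    rw [e]
    simpa using Matrix.PosSemidef.mul_mul_conjTranspose_same h2 V

private lemma aux_psd_diag {M : Mat d} (hM : M.PosSemidef) (i : Fin d) : 0 ≤ M i i := by
  exact hM.diag_nonneg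

private lemma aux_diag_bounds {τ ζ : ℝ} {B : Mat d} (hB : Smem τ ζ B) (i : Fin d) :
    ζ⁻¹ ≤ B i i ∧ B i i ≤ τ⁻¹ := by
  obtain ⟨-, h1, h2⟩ := hB
  have k1 := aux_psd_diag h1 i
  have k2 := aux_psd_diag h2 i
  simp only [Matrix.sub_apply, Matrix.smul_apply, Matrix.one_apply_eq, smul_eq_mul,
    mul_one] at k1 k2
  constructor <;> linarith

private lemma aux_clamp_le {a b l t : ℝ} (hab : a ≤ b) (h1 : a ≤ t) (h2 : t ≤ b) :
    (l - min (max l a) b)^2 ≤ (l - t)^2 := by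
  rcases le_total l a with h | h
  · rw [max_eq_right h, min_eq_left hab]
    nlinarith
  · rcases le_total l b with h' | h'
    · rw [max_eq_left h, min_eq_left h']
      nlinarith [sq_nonneg (l - t)]
    · rw [max_eq_left h, min_eq_right h']
      nlinarith

private lemma aux_clamp_eq {a b l t : ℝ} (hab : a ≤ b) (h1 : a ≤ t) (h2 : t ≤ b)
    (he : (l - t)^2 = (l - min (max l a) b)^2) : t = min (max l a) b := by
  rcases le_total l a with h | h
  · rw [max_eq_right h, min_eq_left hab] at he ⊢
    have : t ≤ a := by nlinarith
    linarith
  · rcases le_total l b with h' | h'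
    · rw [max_eq_left h, min_eq_left h'] at he ⊢
      have h0 : (l - t)^2 = 0 := by nlinarith
      have := pow_eq_zero_iff (n := 2) (by norm_num) |>.mp h0
      linarith
    · rw [max_eq_left h, min_eq_right h'] at he ⊢
      have : b ≤ t := by nlinarith
      linarith

end Stmt6Aux

/-- the Frobenius projection of a symmetric matrix `A = UΛUᵀ` onto `S`
is obtained by clamping the eigenvalues of `A` to `[ζ⁻¹, τ⁻¹]`: `Π_S(A) = UΛ̄Uᵀ`,
the unique Frobenius-distance minimizer over `S`. -/
theorem stmt6 {d : ℕ} (hd : 1 ≤ d) (τ ζ : ℝ) (hτ : 0 < τ) (hτζ : τ ≤ ζ)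
    (A U : Mat d) (hA : A.IsSymm) (lam : Fin d → ℝ)
    (hU1 : U * Uᵀ = 1) (hU2 : Uᵀ * U = 1)
    (hdecomp : A = U * Matrix.diagonal lam * Uᵀ) :
    Smem τ ζ (U * Matrix.diagonal (fun i => min (max (lam i) ζ⁻¹) τ⁻¹) * Uᵀ) ∧
    (∀ X : Mat d, Smem τ ζ X →
      matFrobNorm (A - U * Matrix.diagonal (fun i => min (max (lam i) ζ⁻¹) τ⁻¹) * Uᵀ)
        ≤ matFrobNorm (A - X)) ∧
    (∀ X : Mat d, Smem τ ζ X →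
      (∀ Y : Mat d, Smem τ ζ Y → matFrobNorm (A - X) ≤ matFrobNorm (A - Y)) →
      X = U * Matrix.diagonal (fun i => min (max (lam i) ζ⁻¹) τ⁻¹) * Uᵀ) := by
  classical
  have hζ : 0 < ζ := lt_of_lt_of_le hτ hτζ
  have hinv : ζ⁻¹ ≤ τ⁻¹ := inv_anti₀ hτ hτζ
  set c : Fin d → ℝ := fun i => min (max (lam i) ζ⁻¹) τ⁻¹ with hc
  have hcl : ∀ i, ζ⁻¹ ≤ c i := fun i => le_min (le_max_right _ _) hinv
  have hcu : ∀ i, c i ≤ τ⁻¹ := fun i => min_le_right _ _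
  have hdiagmem : Smem τ ζ (Matrix.diagonal c) := by
    refine ⟨Matrix.isSymm_diagonal c, ?_, ?_⟩
    · show (Matrix.diagonal c - ζ⁻¹ • 1).PosSemidef
      rw [Matrix.smul_one_eq_diagonal, Matrix.diagonal_sub]
      exact Matrix.posSemidef_diagonal_iff.mpr fun i => by
        simpa using sub_nonneg.mpr (hcl i)
    · show (τ⁻¹ • 1 - Matrix.diagonal c).PosSemidef
      rw [Matrix.smul_one_eq_diagonal, Matrix.diagonal_sub]
      exact Matrix.posSemidef_diagonal_iff.mpr fun i => by
        simpa using sub_nonneg.mpr (hcu i)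
  have hPmem : Smem τ ζ (U * Matrix.diagonal c * Uᵀ) := aux_conj U _ hU2 hdiagmem
  have hfs_nonneg : ∀ M : Mat d, (0:ℝ) ≤ ∑ i, ∑ j, (M i j)^2 := fun M =>
    Finset.sum_nonneg fun i _ => Finset.sum_nonneg fun j _ => sq_nonneg _
  have hAP : A - U * Matrix.diagonal c * Uᵀ
      = U * (Matrix.diagonal lam - Matrix.diagonal c) * Uᵀ := by
    rw [hdecomp, Matrix.mul_sub, Matrix.sub_mul]
  have hdiagSq : ∀ (f : Fin d → ℝ) (i : Fin d),
      ∑ j, ((Matrix.diagonal f) i j)^2 = (f i)^2 := by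
    intro f i
    rw [Finset.sum_eq_single i]
    · simp
    · intro j _ hj
      rw [Matrix.diagonal_apply_ne _ (Ne.symm hj)]
      simp
    · simp
  have frobP : ∑ i, ∑ j, ((A - U * Matrix.diagonal c * Uᵀ) i j)^2
      = ∑ i, (lam i - c i)^2 := by
    rw [hAP, aux_frobSq_conj U _ hU2, Matrix.diagonal_sub]
    exact Finset.sum_congr rfl fun i _ => by rw [hdiagSq]
  have hBfacts : ∀ X : Mat d, Smem τ ζ X →
      (∑ i, (lam i - c i)^2) ≤ (∑ i, ∑ j, ((A - X) i j)^2) ∧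
      ((∑ i, ∑ j, ((A - X) i j)^2) = ∑ i, (lam i - c i)^2 →
        X = U * Matrix.diagonal c * Uᵀ) := by
    intro X hX
    set B : Mat d := Uᵀ * X * U with hB
    have hXB : X = U * B * Uᵀ := by
      have e : U * (Uᵀ * X * U) * Uᵀ = (U * Uᵀ) * X * (U * Uᵀ) := by
        simp only [Matrix.mul_assoc]
      rw [hB, e, hU1, Matrix.one_mul, Matrix.mul_one]
    have hBmem : Smem τ ζ B := by
      have h := aux_conj Uᵀ X (by rw [Matrix.transpose_transpose]; exact hU1) hX
      rwa [Matrix.transpose_transpose] at h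
    have hAX : A - X = U * (Matrix.diagonal lam - B) * Uᵀ := by
      conv_lhs => rw [hdecomp, hXB]
      rw [← Matrix.sub_mul, ← Matrix.mul_sub]
    have frobX : ∑ i, ∑ j, ((A - X) i j)^2
        = ∑ i, ∑ j, ((Matrix.diagonal lam - B) i j)^2 := by
      rw [hAX, aux_frobSq_conj U _ hU2]
    have hBd := fun i => aux_diag_bounds hBmem i
    have hpt : ∀ i j : Fin d, (if i = j then (lam i - c i)^2 else 0)
        ≤ ((Matrix.diagonal lam - B) i j)^2 := by
      intro i j
      by_cases h : i = j
      · subst h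
        simp only [if_pos rfl, Matrix.sub_apply, Matrix.diagonal_apply_eq]
        exact aux_clamp_le hinv (hBd i).1 (hBd i).2
      · simp only [if_neg h]
        positivity
    have hdsum : ∑ i, ∑ j, (if i = j then (lam i - c i)^2 else 0)
        = ∑ i, (lam i - c i)^2 := by
      exact Finset.sum_congr rfl fun i _ => by simp
    constructor
    · calc ∑ i, (lam i - c i)^2
          = ∑ i, ∑ j, (if i = j then (lam i - c i)^2 else 0) := hdsum.symm
        _ ≤ ∑ i, ∑ j, ((Matrix.diagonal lam - B) i j)^2 :=
            Finset.sum_le_sum fun i _ => Finset.sum_le_sum fun j _ => hpt i j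
        _ = ∑ i, ∑ j, ((A - X) i j)^2 := frobX.symm
    · intro heq
      have hsum : ∑ i, ∑ j, (if i = j then (lam i - c i)^2 else 0)
          = ∑ i, ∑ j, ((Matrix.diagonal lam - B) i j)^2 := by
        rw [hdsum, ← heq, frobX]
      have houter := (Finset.sum_eq_sum_iff_of_le
        (fun i _ => Finset.sum_le_sum fun j _ => hpt i j)).mp hsum
      have hptEq : ∀ i j : Fin d, (if i = j then (lam i - c i)^2 else 0)
          = ((Matrix.diagonal lam - B) i j)^2 := by
        intro i j
        exact (Finset.sum_eq_sum_iff_of_le (fun j _ => hpt i j)).mp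
          (houter i (Finset.mem_univ i)) j (Finset.mem_univ j)
      have hBdiag : B = Matrix.diagonal c := by
        ext i j
        by_cases h : i = j
        · subst h
          have he := hptEq i i
          simp only [if_pos rfl, Matrix.sub_apply, Matrix.diagonal_apply_eq] at he
          rw [Matrix.diagonal_apply_eq]
          exact aux_clamp_eq hinv (hBd i).1 (hBd i).2 he.symm
        · have he := hptEq i j
          simp only [if_neg h, Matrix.sub_apply, Matrix.diagonal_apply_ne _ h,
            zero_sub] at he
          rw [Matrix.diagonal_apply_ne _ h]
          have : (B i j)^2 = 0 := by linear_combination -he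
          exact pow_eq_zero_iff (n := 2) (by norm_num) |>.mp this
      rw [hXB, hBdiag]
  refine ⟨hPmem, ?_, ?_⟩
  · intro X hX
    apply Real.sqrt_le_sqrt
    rw [frobP]
    exact (hBfacts X hX).1
  · intro X hX hmin
    have h1 := (hBfacts X hX).1
    have h2 := hmin _ hPmem
    have h3 : ∑ i, ∑ j, ((A - X) i j)^2 ≤ ∑ i, (lam i - c i)^2 := by
      rw [← frobP]
      unfold matFrobNorm at h2
      calc ∑ i, ∑ j, ((A - X) i j)^2
          = (Real.sqrt (∑ i, ∑ j, ((A - X) i j)^2))^2 :=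
            (Real.sq_sqrt (hfs_nonneg _)).symm
        _ ≤ (Real.sqrt (∑ i, ∑ j, ((A - U * Matrix.diagonal c * Uᵀ) i j)^2))^2 :=
            pow_le_pow_left₀ (Real.sqrt_nonneg _) h2 2
        _ = ∑ i, ∑ j, ((A - U * Matrix.diagonal c * Uᵀ) i j)^2 :=
            Real.sq_sqrt (hfs_nonneg _)
    exact (hBfacts X hX).2 (le_antisymm h3 h1)
end
end

section
/- Suppose f : ℝ^d → ℝ is twice continuously differentiable, σ-strongly convex, and has γ-Lipschitz Hessian, with minimizer μ*. Let ρ₁ ∈ (0,1), Δ ≥ 0, and let (μ_t)_{t≥1} be a sequence in ℝ^d satisfying f(μ_{t+1}) − f(μ*) ≤ (1 − ρ₁)·(f(μ_t) − f(μ*)) + Δ for all t ≥ 1. Then for every k ≥ 2, Σ_{t=2}^k ‖Π_{S'}(∇²f(μ_t)) − Π_{S'}(∇²f(μ*))‖_F² ≤ Σ_{t=2}^k ‖∇²f(μ_t) − ∇²f(μ*)‖_F² ≤ (2γ²/(ρ₁σ))·((f(μ₁) − f(μ*)) + (k−1)·Δ). -/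
open MeasureTheory ProbabilityTheory Matrix
open scoped BigOperators RealInnerProductSpace

noncomputable section

namespace Stmt18Aux

variable {d : ℕ}

def Em (A : Mat d) : EuclideanSpace ℝ (Fin d × Fin d) :=
  WithLp.toLp 2 (fun p : Fin d × Fin d => A p.1 p.2)

lemma Em_frob (A : Mat d) : matFrobNorm A = ‖Em A‖ := by
  rw [EuclideanSpace.norm_eq, matFrobNorm]
  congr 1
  rw [Fintype.sum_prod_type]
  refine Finset.sum_congr rfl fun i _ => Finset.sum_congr rfl fun j _ => ?_
  rw [Real.norm_eq_abs, sq_abs]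
  rfl

lemma frob_nonneg {m n : ℕ} (A : Matrix (Fin m) (Fin n) ℝ) : 0 ≤ matFrobNorm A :=
  Real.sqrt_nonneg _

lemma psd_smul {M : Mat d} (h : M.PosSemidef) {c : ℝ} (hc : 0 ≤ c) :
    (c • M).PosSemidef := by
  refine Matrix.PosSemidef.of_dotProduct_mulVec_nonneg ?_ fun x => ?_
  · unfold Matrix.IsHermitian
    rw [Matrix.conjTranspose_smul, h.1, star_trivial]
  · rw [Matrix.smul_mulVec, dotProduct_smul, smul_eq_mul]
    exact mul_nonneg hc (h.dotProduct_mulVec_nonneg x)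

lemma S'mem_convex {τ ζ : ℝ} {P X : Mat d} (hP : S'mem τ ζ P) (hX : S'mem τ ζ X)
    {t : ℝ} (ht0 : 0 ≤ t) (ht1 : t ≤ 1) : S'mem τ ζ (P + t • (X - P)) := by
  obtain ⟨hPs, hPl, hPu⟩ := hP
  obtain ⟨hXs, hXl, hXu⟩ := hX
  have h1 : P + t • (X - P) = (1 - t) • P + t • X := by module
  rw [h1]
  refine ⟨(hPs.smul (1-t)).add (hXs.smul t), ?_, ?_⟩
  · unfold loeLE
    have h2 : (1 - t) • P + t • X - τ • (1 : Mat d)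
        = (1-t) • (P - τ • (1:Mat d)) + t • (X - τ • (1:Mat d)) := by module
    rw [h2]
    exact (psd_smul hPl (by linarith)).add (psd_smul hXl ht0)
  · unfold loeLE
    have h2 : ζ • (1 : Mat d) - ((1 - t) • P + t • X)
        = (1-t) • (ζ • (1:Mat d) - P) + t • (ζ • (1:Mat d) - X) := by module
    rw [h2]
    exact (psd_smul hPu (by linarith)).add (psd_smul hXu ht0)

lemma proj_vi {τ ζ : ℝ} (proj : Mat d → Mat d)
    (hproj : ∀ A : Mat d, S'mem τ ζ (proj A) ∧
      ∀ X : Mat d, S'mem τ ζ X → matFrobNorm (A - proj A) ≤ matFrobNorm (A - X))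
    (A X : Mat d) (hX : S'mem τ ζ X) :
    ⟪Em A - Em (proj A), Em X - Em (proj A)⟫ ≤ 0 := by
  by_contra hcon
  push_neg at hcon
  set p := proj A with hp
  set a := Em A - Em p with ha
  set b := Em X - Em p with hb
  set c := ⟪a, b⟫ with hc
  have hbne : b ≠ 0 := by
    intro h0
    rw [hc, h0, inner_zero_right] at hcon
    exact lt_irrefl 0 hcon
  have hbpos : 0 < ‖b‖^2 := pow_pos (norm_pos_iff.2 hbne) 2
  set t := min 1 (c / ‖b‖^2) with htd
  have ht0 : 0 < t := lt_min one_pos (div_pos hcon hbpos)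
  have ht1 : t ≤ 1 := min_le_left _ _
  have hmem := S'mem_convex (hproj A).1 hX ht0.le ht1
  have hmin := (hproj A).2 _ hmem
  rw [Em_frob, Em_frob] at hmin
  have hE1 : Em (A - p) = a := by ext q; simp [Em, ha]
  have hE2 : Em (A - (p + t • (X - p))) = a - t • b := by
    ext q
    simp [Em, ha, hb, Matrix.sub_apply, Matrix.add_apply, Matrix.smul_apply,
      PiLp.sub_apply, PiLp.smul_apply, smul_eq_mul]
    ring
  rw [hE1, hE2] at hmin
  have hsq : ‖a‖^2 ≤ ‖a - t • b‖^2 := pow_le_pow_left₀ (norm_nonneg a) hmin 2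
  have hexp : ‖a - t • b‖^2 = ‖a‖^2 - 2*(t*c) + t^2*‖b‖^2 := by
    rw [norm_sub_sq_real, real_inner_smul_right, norm_smul, Real.norm_eq_abs, mul_pow, sq_abs]
  have htb : t * ‖b‖^2 ≤ c := by
    have h := min_le_right 1 (c/‖b‖^2)
    calc t * ‖b‖^2 ≤ (c/‖b‖^2) * ‖b‖^2 := mul_le_mul_of_nonneg_right h hbpos.le
    _ = c := div_mul_cancel₀ c (ne_of_gt hbpos)
  nlinarith [mul_le_mul_of_nonneg_left htb ht0.le, hsq, hexp, mul_pos ht0 hcon]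

lemma proj_nonexp {τ ζ : ℝ} (proj : Mat d → Mat d)
    (hproj : ∀ A : Mat d, S'mem τ ζ (proj A) ∧
      ∀ X : Mat d, S'mem τ ζ X → matFrobNorm (A - proj A) ≤ matFrobNorm (A - X))
    (A B : Mat d) : matFrobNorm (proj A - proj B) ≤ matFrobNorm (A - B) := by
  have h1 := proj_vi proj hproj A (proj B) (hproj B).1
  have h2 := proj_vi proj hproj B (proj A) (hproj A).1
  rw [Em_frob, Em_frob]
  have e1 : Em (proj A - proj B) = Em (proj A) - Em (proj B) := by ext q; simp [Em]
  have e2 : Em (A - B) = Em A - Em B := by ext q; simp [Em]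
  rw [e1, e2]
  set u := Em (proj A) - Em (proj B) with hu
  set v := Em A - Em B with hv
  have key : ‖u‖^2 ≤ ⟪v, u⟫ := by
    rw [← real_inner_self_eq_norm_sq]
    simp only [hu, hv, inner_sub_left, inner_sub_right] at h1 h2 ⊢
    linarith [h1, h2, real_inner_comm (Em (proj A)) (Em (proj B))]
  have hcs := key.trans (real_inner_le_norm v u)
  rcases eq_or_lt_of_le (norm_nonneg u) with h0 | hpos
  · rw [← h0]; exact norm_nonneg _
  · nlinarith [hcs, hpos]

end Stmt18Aux

/-- cumulative Hessian-drift bound along a linearly convergent sequence,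
where `proj = Π_{S'}` is the Frobenius projection onto `S'` (a nonexpansive map given by
its minimizing property). -/
theorem stmt18 {d : ℕ} (hd : 1 ≤ d) (τ ζ σ γ ρ₁ Δ : ℝ)
    (hτ : 0 < τ) (hτζ : τ ≤ ζ) (hσ0 : 0 < σ) (hγ0 : 0 ≤ γ)
    (hρ0 : 0 < ρ₁) (hρ1 : ρ₁ < 1) (hΔ : 0 ≤ Δ)
    (f : Vec d → ℝ) (hf : ContDiff ℝ 2 f)
    (hσ : ∀ x y : Vec d, f x - f y ≥ ⟪gradient f y, x - y⟫ + σ / 2 * ‖x - y‖ ^ 2)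
    (hγ : ∀ x y : Vec d, matOpNorm (hess f x - hess f y) ≤ γ * ‖x - y‖)
    (hγF : ∀ x y : Vec d, matFrobNorm (hess f x - hess f y) ≤ γ * ‖x - y‖)
    (μstar : Vec d) (hμstar : ∀ z, f μstar ≤ f z)
    (μ : ℕ → Vec d)
    (hrec : ∀ t : ℕ, 1 ≤ t → f (μ (t + 1)) - f μstar ≤ (1 - ρ₁) * (f (μ t) - f μstar) + Δ)
    (proj : Mat d → Mat d)
    (hproj : ∀ A : Mat d, S'mem τ ζ (proj A) ∧
      ∀ X : Mat d, S'mem τ ζ X → matFrobNorm (A - proj A) ≤ matFrobNorm (A - X))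
    (k : ℕ) (hk : 2 ≤ k) :
    (∑ t ∈ Finset.Icc 2 k, matFrobNorm (proj (hess f (μ t)) - proj (hess f μstar)) ^ 2)
        ≤ (∑ t ∈ Finset.Icc 2 k, matFrobNorm (hess f (μ t) - hess f μstar) ^ 2) ∧
    (∑ t ∈ Finset.Icc 2 k, matFrobNorm (hess f (μ t) - hess f μstar) ^ 2)
        ≤ 2 * γ ^ 2 / (ρ₁ * σ) * ((f (μ 1) - f μstar) + ((k : ℝ) - 1) * Δ) := by
  
  classical
  -- gradient is zero at the minimizer
  have hdf : Differentiable ℝ f := hf.differentiable (by norm_num)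
  have hmin : IsLocalMin f μstar := Filter.Eventually.of_forall hμstar
  have hgrad : gradient f μstar = 0 := by
    unfold gradient
    rw [hmin.fderiv_eq_zero]
    simp
  have hlow : ∀ z : Vec d, σ / 2 * ‖z - μstar‖ ^ 2 ≤ f z - f μstar := by
    intro z
    have h := hσ z μstar
    rw [hgrad] at h
    simpa using h
  set e : ℕ → ℝ := fun t => f (μ t) - f μstar with he
  have he0 : ∀ t, 0 ≤ e t := fun t => sub_nonneg.2 (hμstar _)
  have hrec' : ∀ t : ℕ, 1 ≤ t → e (t+1) ≤ (1 - ρ₁) * e t + Δ := by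
    intro t ht
    simpa [he] using hrec t ht
  have hsum1 : ∀ n : ℕ, 1 ≤ n → ρ₁ * (∑ t ∈ Finset.Icc 1 n, e t) + e (n+1) ≤ e 1 + n * Δ := by
    intro n hn
    induction n with
    | zero => omega
    | succ m ih =>
      by_cases hm : m = 0
      · subst hm
        have h := hrec' 1 le_rfl
        simp only [Finset.Icc_self, Finset.sum_singleton]
        push_cast
        linarith
      · have hm1 : 1 ≤ m := Nat.one_le_iff_ne_zero.2 hm
        have ihm := ih hm1
        have hrecm := hrec' (m+1) (by omega)
        rw [Finset.sum_Icc_succ_top (by omega : 1 ≤ m+1)]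
        have hx : ρ₁ * ((∑ t ∈ Finset.Icc 1 m, e t) + e (m+1))
            = ρ₁ * (∑ t ∈ Finset.Icc 1 m, e t) + ρ₁ * e (m+1) := mul_add _ _ _
        push_cast
        push_cast at ihm
        linarith
  obtain ⟨m, rfl⟩ : ∃ m, k = m + 1 := ⟨k - 1, by omega⟩
  have hm1 : 1 ≤ m := by omega
  have hkey := hsum1 m hm1
  have hins : Finset.Icc 1 (m+1) = insert 1 (Finset.Icc 2 (m+1)) := by
    ext x
    simp only [Finset.mem_Icc, Finset.mem_insert]
    omega
  have htop : ∑ t ∈ Finset.Icc 1 (m+1), e t = (∑ t ∈ Finset.Icc 1 m, e t) + e (m+1) :=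
    Finset.sum_Icc_succ_top (by omega) e
  have hbot : ∑ t ∈ Finset.Icc 1 (m+1), e t = e 1 + ∑ t ∈ Finset.Icc 2 (m+1), e t := by
    rw [hins, Finset.sum_insert (by simp)]
  have hS2 : ρ₁ * (∑ t ∈ Finset.Icc 2 (m+1), e t) ≤ e 1 + (m:ℝ) * Δ := by
    have hSig : ∑ t ∈ Finset.Icc 2 (m+1), e t
        = (∑ t ∈ Finset.Icc 1 m, e t) + e (m+1) - e 1 := by linarith
    rw [hSig]
    nlinarith [he0 1, he0 (m+1), mul_nonneg hρ0.le (he0 1),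
      mul_nonneg (by linarith : (0:ℝ) ≤ 1 - ρ₁) (he0 (m+1))]
  constructor
  · refine Finset.sum_le_sum fun t _ => ?_
    exact pow_le_pow_left₀ (Stmt18Aux.frob_nonneg _)
      (Stmt18Aux.proj_nonexp proj hproj _ _) 2
  · have hterm : ∀ t : ℕ, matFrobNorm (hess f (μ t) - hess f μstar) ^ 2
        ≤ γ ^ 2 * (2 / σ) * e t := by
      intro t
      have h1 : matFrobNorm (hess f (μ t) - hess f μstar) ≤ γ * ‖μ t - μstar‖ := hγF _ _
      have h2 : ‖μ t - μstar‖ ^ 2 ≤ 2 / σ * e t := by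
        have h := hlow (μ t)
        have h3 : (2/σ) * (σ/2 * ‖μ t - μstar‖ ^ 2) ≤ (2/σ) * e t :=
          mul_le_mul_of_nonneg_left h (by positivity)
        have h4 : (2/σ) * (σ/2 * ‖μ t - μstar‖ ^ 2) = ‖μ t - μstar‖ ^ 2 := by
          field_simp
        linarith
      calc matFrobNorm (hess f (μ t) - hess f μstar) ^ 2
          ≤ (γ * ‖μ t - μstar‖) ^ 2 := pow_le_pow_left₀ (Stmt18Aux.frob_nonneg _) h1 2
        _ = γ ^ 2 * ‖μ t - μstar‖ ^ 2 := by ring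
        _ ≤ γ ^ 2 * (2 / σ * e t) := mul_le_mul_of_nonneg_left h2 (sq_nonneg γ)
        _ = γ ^ 2 * (2 / σ) * e t := by ring
    have hsumF : (∑ t ∈ Finset.Icc 2 (m+1), matFrobNorm (hess f (μ t) - hess f μstar) ^ 2)
        ≤ γ ^ 2 * (2 / σ) * ∑ t ∈ Finset.Icc 2 (m+1), e t := by
      rw [Finset.mul_sum]
      exact Finset.sum_le_sum fun t _ => hterm t
    have hSige : (∑ t ∈ Finset.Icc 2 (m+1), e t) ≤ (e 1 + (m:ℝ) * Δ) / ρ₁ := by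
      rw [le_div_iff₀ hρ0]
      linarith [hS2]
    have hfinal : γ ^ 2 * (2 / σ) * (∑ t ∈ Finset.Icc 2 (m+1), e t)
        ≤ γ ^ 2 * (2 / σ) * ((e 1 + (m:ℝ) * Δ) / ρ₁) :=
      mul_le_mul_of_nonneg_left hSige (by positivity)
    have heq : γ ^ 2 * (2 / σ) * ((e 1 + (m:ℝ) * Δ) / ρ₁)
        = 2 * γ ^ 2 / (ρ₁ * σ) * (e 1 + (m:ℝ) * Δ) := by
      field_simp
    have hcast : ((m:ℝ) + 1) - 1 = (m:ℝ) := by ring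
    push_cast
    rw [hcast]
    calc (∑ t ∈ Finset.Icc 2 (m+1), matFrobNorm (hess f (μ t) - hess f μstar) ^ 2)
        ≤ γ ^ 2 * (2 / σ) * ((e 1 + (m:ℝ) * Δ) / ρ₁) := hsumF.trans hfinal
      _ = 2 * γ ^ 2 / (ρ₁ * σ) * (e 1 + (m:ℝ) * Δ) := heq
      _ = 2 * γ ^ 2 / (ρ₁ * σ) * ((f (μ 1) - f μstar) + (m:ℝ) * Δ) := by rw [he]
end
end
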